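/- For atomic steps a, b and command c, under the synchronous interchange axiom and conjunctivity: a^*;c ∥ b^∞ = (a∥b)^* ; (c ∥ b^∞). -/
import Mathlib


/-- A Concurrent Refinement Algebra over a complete distributive lattice of
commands, ordered by refinement (`⊓` = nondeterministic choice, `⊥` = abort,
`⊤` = magic), with sequential composition `seq` (identity `nil`),
synchronous parallel `par`, weak conjunction `conj`, a Boolean-style
sub-lattice of atomic steps `Atomic` (with `eps` the environment-step identity
of `par`) and a sub-lattice of tests `Test`. -/
structure CRA (C : Type*) [CompleteDistribLattice C] where
  seq : C → C → C
  par : C → C → C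
  conj : C → C → C
  nil : C
  eps : C
  Atomic : C → Prop
  Test : C → Prop
  seq_assoc : ∀ a b c, seq (seq a b) c = seq a (seq b c)
  seq_nil : ∀ c, seq c nil = c
  nil_seq : ∀ c, seq nil c = c
  seq_mono_left : ∀ d : C, Monotone fun c => seq c d
  seq_mono_right : ∀ c : C, Monotone (seq c)
  top_seq : ∀ c, seq ⊤ c = ⊤
  bot_seq : ∀ c, seq ⊥ c = ⊥
  /-- sequential composition distributes over arbitrary choices on the right -/
  seq_sInf_distrib : ∀ (S : Set C) (d : C), seq (sInf S) d = ⨅ c ∈ S, seq c d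
  par_assoc : ∀ a b c, par (par a b) c = par a (par b c)
  par_comm : ∀ a b, par a b = par b a
  /-- parallel distributes over arbitrary choices -/
  par_sInf_distrib : ∀ (c : C) (S : Set C), par c (sInf S) = ⨅ d ∈ S, par c d
  nil_par_nil : par nil nil = nil
  atomic_par : ∀ a b, Atomic a → Atomic b → Atomic (par a b)
  /-- synchronous interchange law for atomic steps -/
  interchange : ∀ a b c d, Atomic a → Atomic b →
    par (seq a c) (seq b d) = seq (par a b) (par c d)
  par_atomic_seq_nil : ∀ a c, Atomic a → par (seq a c) nil = ⊤
  atomic_eps : Atomic eps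
  /-- `eps` is the identity of parallel on atomic steps -/
  eps_par_atomic : ∀ a, Atomic a → par eps a = a
  conj_assoc : ∀ a b c, conj (conj a b) c = conj a (conj b c)
  conj_comm : ∀ a b, conj a b = conj b a
  conj_idem : ∀ a, conj a a = a
  conj_bot : ∀ c, conj c ⊥ = ⊥
  conj_atomic : ∀ a b, Atomic a → Atomic b → conj a b = a ⊔ b
  conj_test : ∀ t t', Test t → Test t' → conj t t' = t ⊔ t'
  conj_interchange : ∀ a b c d, Atomic a → Atomic b →
    conj (seq a c) (seq b d) = seq (conj a b) (conj c d)
  conj_atomic_seq_nil : ∀ a c, Atomic a → conj (seq a c) nil = ⊤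
  conj_sInf_distrib : ∀ (c : C) (S : Set C), S.Nonempty →
    conj c (sInf S) = ⨅ d ∈ S, conj c d
  atomic_conj : ∀ a b, Atomic a → Atomic b → Atomic (conj a b)
  test_nil : Test nil
  test_nil_le : ∀ t, Test t → nil ≤ t
  test_seq_par_interchange : ∀ t t' c d, Test t → Test t' →
    par (seq t c) (seq t' d) = seq (t ⊔ t') (par c d)
  conj_test_interchange : ∀ t t' c d, Test t → Test t' →
    conj (seq t c) (seq t' d) = seq (t ⊔ t') (conj c d)

namespace CRA

variable {C : Type*} [CompleteDistribLattice C] (A : CRA C)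

/-- possibly infinite iteration `c^ω = μ x. nil ⊓ c;x` -/
def omega (c : C) : C :=
  OrderHom.lfp ⟨fun x => A.nil ⊓ A.seq c x,
    fun _ _ h => inf_le_inf_left _ (A.seq_mono_right c h)⟩

/-- finite iteration `c^* = ν x. nil ⊓ c;x` -/
def star (c : C) : C :=
  OrderHom.gfp ⟨fun x => A.nil ⊓ A.seq c x,
    fun _ _ h => inf_le_inf_left _ (A.seq_mono_right c h)⟩

/-- infinite iteration `c^∞ = c^ω ; ⊤` -/
def inft (c : C) : C := A.seq (A.omega c) ⊤

/-- finite powers: `c^0 = nil`, `c^(i+1) = c ; c^i` -/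
def pow (c : C) : ℕ → C
  | 0 => A.nil
  | n + 1 => A.seq c (pow c n)

end CRA

section Helpers

variable {C : Type*} [CompleteDistribLattice C] (A : CRA C)

lemma seq_inf_left (x y d : C) : A.seq (x ⊓ y) d = A.seq x d ⊓ A.seq y d := by
  have := A.seq_sInf_distrib {x, y} d
  simp only [sInf_insert, sInf_singleton, iInf_insert, iInf_singleton] at this
  exact this

lemma seq_iInf_left {ι : Sort*} (f : ι → C) (d : C) :
    A.seq (⨅ i, f i) d = ⨅ i, A.seq (f i) d := by
  have := A.seq_sInf_distrib (Set.range f) d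
  simp only [sInf_range, iInf_range] at this
  exact this

lemma par_iInf {ι : Sort*} (c : C) (f : ι → C) :
    A.par c (⨅ i, f i) = ⨅ i, A.par c (f i) := by
  have := A.par_sInf_distrib c (Set.range f)
  simp only [sInf_range, iInf_range] at this
  exact this

lemma star_fix (c : C) : A.star c = A.nil ⊓ A.seq c (A.star c) :=
  (OrderHom.map_gfp _).symm

lemma omega_fix (c : C) : A.omega c = A.nil ⊓ A.seq c (A.omega c) :=
  (OrderHom.map_lfp _).symm

lemma star_eq_iInf_pow
    (hconj : ∀ (c : C) (S : Set C), S.Nonempty → A.seq c (sInf S) = ⨅ d ∈ S, A.seq c d)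
    (c : C) : A.star c = ⨅ i, A.pow c i := by
  have hseqi : ∀ (e : C) (f : ℕ → C), A.seq e (⨅ i, f i) = ⨅ i, A.seq e (f i) := by
    intro e f
    have := hconj e (Set.range f) (Set.range_nonempty f)
    simp only [sInf_range, iInf_range] at this
    exact this
  apply le_antisymm
  · refine le_iInf fun i => ?_
    induction i with
    | zero =>
        calc A.star c ≤ A.nil := by rw [star_fix]; exact inf_le_left
        _ = A.pow c 0 := rfl
    | succ n ih =>
        calc A.star c ≤ A.seq c (A.star c) := by
              conv_lhs => rw [star_fix]
              exact inf_le_right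
        _ ≤ A.seq c (A.pow c n) := A.seq_mono_right c ih
        _ = A.pow c (n + 1) := rfl
  · refine OrderHom.le_gfp _ ?_
    show (⨅ i, A.pow c i) ≤ A.nil ⊓ A.seq c (⨅ i, A.pow c i)
    refine le_inf (iInf_le _ 0) ?_
    rw [hseqi]
    exact le_iInf fun i => iInf_le _ (i + 1)

lemma inft_fix (b : C) : A.inft b = A.seq b (A.inft b) := by
  conv_lhs => rw [CRA.inft, omega_fix, seq_inf_left, A.nil_seq, A.seq_assoc]
  rw [top_inf_eq]
  rfl

lemma inft_pow (b : C) (i : ℕ) : A.inft b = A.seq (A.pow b i) (A.inft b) := by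
  induction i with
  | zero => simp [CRA.pow, A.nil_seq]
  | succ n ih =>
      show A.inft b = A.seq (A.seq b (A.pow b n)) (A.inft b)
      rw [A.seq_assoc, ← ih, ← inft_fix]

lemma pow_interchange (a b : C) (ha : A.Atomic a) (hb : A.Atomic b) (i : ℕ) (c d : C) :
    A.par (A.seq (A.pow a i) c) (A.seq (A.pow b i) d) =
      A.seq (A.pow (A.par a b) i) (A.par c d) := by
  induction i generalizing c d with
  | zero => simp [CRA.pow, A.nil_seq]
  | succ n ih =>
      show A.par (A.seq (A.seq a (A.pow a n)) c) (A.seq (A.seq b (A.pow b n)) d) = _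
      rw [A.seq_assoc, A.seq_assoc, A.interchange _ _ _ _ ha hb, ih,
        ← A.seq_assoc]
      rfl

end Helpers

theorem atomic_iteration_finite_infinite {C : Type*} [CompleteDistribLattice C] (A : CRA C)
    (hconj : ∀ (c : C) (S : Set C), S.Nonempty → A.seq c (sInf S) = ⨅ d ∈ S, A.seq c d) (a b c : C) (ha : A.Atomic a) (hb : A.Atomic b) :
    A.par (A.seq (A.star a) c) (A.inft b) =
      A.seq (A.star (A.par a b)) (A.par c (A.inft b)) := by
  have hstar := star_eq_iInf_pow A hconj
  rw [hstar a, hstar (A.par a b), seq_iInf_left, A.par_comm, par_iInf, seq_iInf_left]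
  refine iInf_congr fun i => ?_
  rw [A.par_comm, inft_pow A b i, pow_interchange A a b ha hb i c (A.inft b),
    ← inft_pow A b i]
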